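/- Let k ≥ 4, let M be a simple matroid of rank k+1, and let (X₂,…,X_k) be an optimal k-stratification of M. Let i ∈ {3,…,k−1}. If X_i is a rank-i flat of M and |X_{i−1}| < |X_i|/k, then (X_i, X_{i+1}, …, X_k) is an optimal partial (k−1)-stratification of the 1-fold principal truncation N of X_i in M; in particular, for each ℓ ∈ {i,…,k}, X_ℓ is (ℓ−1)-degenerate in N and is a largest (ℓ−1)-degenerate subset of X_{ℓ+1} in N (where X_{k+1} = E(M)). -/

import Mathlib

open Set
open scoped Classical

namespace MatroidPaper

variable {α : Type*}

/-- The rank of a set in a matroid: the supremum of cardinalities of independent subsets. -/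
noncomputable def rkS (M : Matroid α) (X : Set α) : ℕ :=
  sSup {n | ∃ I, M.Indep I ∧ I ⊆ X ∧ I.ncard = n}

/-- The rank of a matroid. -/
noncomputable def rk (M : Matroid α) : ℕ := rkS M M.E

/-- A hyperplane: a flat of rank `rk M - 1`. -/
def Hyp (M : Matroid α) (H : Set α) : Prop := M.IsFlat H ∧ rkS M H = rk M - 1

/-- Two sets are skew if the rank of their union is the sum of their ranks. -/
def SkewSets (M : Matroid α) (X Y : Set α) : Prop :=
  rkS M (X ∪ Y) = rkS M X + rkS M Y

/-- A simple matroid: every subset of the ground set with at most two elements is independent. -/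
def SimpleM (M : Matroid α) : Prop := ∀ X ⊆ M.E, X.ncard ≤ 2 → M.Indep X

/-- A real-representable matroid. -/
def RealRep (M : Matroid α) : Prop :=
  ∃ (n : ℕ) (φ : α → (Fin n → ℝ)), ∀ I, I ⊆ M.E →
    (M.Indep I ↔ LinearIndependent ℝ (fun x : I => φ x))

/-- A matroid is `k`-degenerate if it has rank at most one or its ground set is covered by
flats of rank at least two with `∑ (r(Fᵢ) - 1) ≤ k - 1`. -/
def Degen (M : Matroid α) (k : ℕ) : Prop :=
  rk M ≤ 1 ∨ ∃ (t : ℕ) (F : Fin t → Set α),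
    (∀ i, M.IsFlat (F i) ∧ 2 ≤ rkS M (F i)) ∧
    M.E ⊆ ⋃ i, F i ∧ ∑ i, (rkS M (F i) - 1) ≤ k - 1

/-- A set `X` is `k`-degenerate in `M` if the restriction `M|X` is a `k`-degenerate matroid. -/
def DegenSet (M : Matroid α) (X : Set α) (k : ℕ) : Prop := Degen (M.restrict X) k

/-- `N` is the (one-fold) principal truncation of `F` in `M`. -/
noncomputable def IsPT (M : Matroid α) (F : Set α) (N : Matroid α) : Prop :=
  N.E = M.E ∧ ∀ X ⊆ M.E,
    rkS N X = if F ⊆ M.closure X then rkS M X - 1 else rkS M X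

/-- `N` is the complete principal truncation `M ÷ F` of `F` in `M`. -/
def IsCPT (M : Matroid α) (F : Set α) (N : Matroid α) : Prop :=
  N.E = M.E ∧ ∀ X ⊆ M.E,
    rkS N X = min (rkS M X + (rkS M F - 1)) (rkS M (X ∪ F)) - (rkS M F - 1)

/- ===== auxiliary lemmas ===== -/
section Aux

variable {M : Matroid α} {I J F X Y Z : Set α}

lemma closure_flat' (M : Matroid α) (X : Set α) : M.IsFlat (M.closure X) := by
  rw [Matroid.closure_def]
  have hne : Nonempty {F // M.IsFlat F ∧ X ∩ M.E ⊆ F} :=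
    ⟨⟨M.E, M.ground_isFlat, inter_subset_right⟩⟩
  have h := Matroid.IsFlat.iInter (M := M)
    (Fs := fun F : {F // M.IsFlat F ∧ X ∩ M.E ⊆ F} => F.1) (fun F => F.2.1)
  rw [sInter_eq_iInter]
  exact h

lemma rkS_eq_ncard [M.Finite] (hI : M.IsBasis I X) : rkS M X = I.ncard := by
  have hXE : X ⊆ M.E := hI.subset_ground
  have hub : ∀ n ∈ {n | ∃ J, M.Indep J ∧ J ⊆ X ∧ J.ncard = n}, n ≤ I.ncard := by
    rintro n ⟨J, hJ, hJX, rfl⟩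
    obtain ⟨J', hJ', hJJ'⟩ := hJ.subset_isBasis_of_subset hJX hXE
    have hcard : J'.ncard = I.ncard := by
      have := hJ'.encard_eq_encard hI
      simp [Set.ncard_def, this]
    calc J.ncard ≤ J'.ncard := Set.ncard_le_ncard hJJ' (M.set_finite J' (hJ'.indep.subset_ground))
      _ = I.ncard := hcard
  have hmem : I.ncard ∈ {n | ∃ J, M.Indep J ∧ J ⊆ X ∧ J.ncard = n} :=
    ⟨I, hI.indep, hI.subset, rfl⟩
  exact le_antisymm (csSup_le ⟨_, hmem⟩ hub) (le_csSup ⟨_, hub⟩ hmem)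

lemma rkS_le {m : ℕ} (h : ∀ I, M.Indep I → I ⊆ X → I.ncard ≤ m) : rkS M X ≤ m :=
  csSup_le ⟨0, ∅, M.empty_indep, empty_subset _, by simp⟩
    (by rintro n ⟨I, hI, hIX, rfl⟩; exact h I hI hIX)

lemma ncard_le_rkS [M.Finite] (hI : M.Indep I) (hIX : I ⊆ X) (hX : X ⊆ M.E) :
    I.ncard ≤ rkS M X := by
  obtain ⟨J, hJ, hIJ⟩ := hI.subset_isBasis_of_subset hIX hX
  rw [rkS_eq_ncard hJ]
  exact Set.ncard_le_ncard hIJ (M.set_finite J hJ.indep.subset_ground)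

lemma rkS_mono [M.Finite] (h : X ⊆ Y) (hY : Y ⊆ M.E) : rkS M X ≤ rkS M Y :=
  rkS_le fun I hI hIX => ncard_le_rkS hI (hIX.trans h) hY

@[simp] lemma rkS_empty (M : Matroid α) : rkS M ∅ = 0 :=
  le_antisymm (rkS_le fun I _ hI => by simp [subset_empty_iff.1 hI]) (Nat.zero_le _)

lemma rkS_closure [M.Finite] (hX : X ⊆ M.E) : rkS M (M.closure X) = rkS M X := by
  obtain ⟨I, hI⟩ := M.exists_isBasis X hX
  rw [rkS_eq_ncard hI.isBasis_closure_right, rkS_eq_ncard hI]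

lemma rkS_restrict (hZ : Z ⊆ Y) : rkS (M.restrict Y) Z = rkS M Z := by
  unfold rkS
  congr 1
  ext n
  constructor
  · rintro ⟨I, hI, hIZ, rfl⟩
    exact ⟨I, (Matroid.restrict_indep_iff.1 hI).1, hIZ, rfl⟩
  · rintro ⟨I, hI, hIZ, rfl⟩
    exact ⟨I, Matroid.restrict_indep_iff.2 ⟨hI, hIZ.trans hZ⟩, hIZ, rfl⟩

lemma rk_restrict (M : Matroid α) (Y : Set α) : rk (M.restrict Y) = rkS M Y := by
  rw [rk, Matroid.restrict_ground_eq, rkS_restrict (subset_refl Y)]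

lemma subset_closure_of_rkS_le [M.Finite] (hZX : Z ⊆ X) (hX : X ⊆ M.E)
    (h : rkS M X ≤ rkS M Z) : X ⊆ M.closure Z := by
  obtain ⟨I, hI⟩ := M.exists_isBasis Z (hZX.trans hX)
  obtain ⟨J, hJ, hIJ⟩ := hI.indep.subset_isBasis_of_subset (hI.subset.trans hZX) hX
  have hJI : J = I := by
    refine (Set.eq_of_subset_of_ncard_le hIJ ?_ (M.set_finite J hJ.indep.subset_ground)).symm
    rw [← rkS_eq_ncard hI, ← rkS_eq_ncard hJ]; exact h
  refine hJ.subset_closure.trans ?_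
  rw [hJI]
  exact M.closure_subset_closure hI.subset

lemma rkS_submod [M.Finite] (hX : X ⊆ M.E) (hY : Y ⊆ M.E) :
    rkS M (X ∪ Y) + rkS M (X ∩ Y) ≤ rkS M X + rkS M Y := by
  obtain ⟨I, hI⟩ := M.exists_isBasis (X ∩ Y) ((inter_subset_left).trans hX)
  obtain ⟨J, hJ, hIJ⟩ := hI.indep.subset_isBasis_of_subset
    (hI.subset.trans (inter_subset_left.trans subset_union_left)) (union_subset hX hY)
  have hJfin : J.Finite := M.set_finite J hJ.indep.subset_ground
  rw [rkS_eq_ncard hI, rkS_eq_ncard hJ]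
  have h1 : (J ∩ X).ncard ≤ rkS M X :=
    ncard_le_rkS (hJ.indep.subset inter_subset_left) inter_subset_right hX
  have h2 : (J ∩ Y).ncard ≤ rkS M Y :=
    ncard_le_rkS (hJ.indep.subset inter_subset_left) inter_subset_right hY
  have hcup : (J ∩ X) ∪ (J ∩ Y) = J := by
    rw [← inter_union_distrib_left]
    exact inter_eq_self_of_subset_left hJ.subset
  have hcap : I ⊆ (J ∩ X) ∩ (J ∩ Y) := by
    rw [inter_inter_inter_comm, inter_self]
    exact subset_inter hIJ hI.subset
  have hie := Set.ncard_union_add_ncard_inter (J ∩ X) (J ∩ Y)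
    (hJfin.subset inter_subset_left) (hJfin.subset inter_subset_left)
  rw [hcup] at hie
  have hIle : I.ncard ≤ ((J ∩ X) ∩ (J ∩ Y)).ncard :=
    Set.ncard_le_ncard hcap (hJfin.subset (inter_subset_left.trans inter_subset_left))
  omega

lemma restrict_finite' [M.Finite] (hY : Y ⊆ M.E) : (M.restrict Y).Finite :=
  ⟨by rw [Matroid.restrict_ground_eq]; exact M.set_finite Y hY⟩

lemma degenSet_of_cover [M.Finite] (hY : Y ⊆ M.E) {ι : Type} {s : Finset ι}
    {G : ι → Set α} (hsub : ∀ j ∈ s, G j ⊆ Y) (h2 : ∀ j ∈ s, 2 ≤ rkS M (G j))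
    (hcov : Y ⊆ ⋃ j ∈ s, G j) {d : ℕ} (hsum : ∑ j ∈ s, (rkS M (G j) - 1) ≤ d - 1) :
    DegenSet M Y d := by
  haveI := restrict_finite' hY
  set R := M.restrict Y with hR
  refine Or.inr ?_
  set t := Fintype.card ↥s with ht
  set e : ↥s ≃ Fin t := Fintype.equivFin ↥s with he
  refine ⟨t, fun m => R.closure (G (e.symm m).1), fun m => ?_, ?_, ?_⟩
  · have hjs := (e.symm m).2
    have hGE : G (e.symm m).1 ⊆ R.E := by
      rw [hR, Matroid.restrict_ground_eq]; exact hsub _ hjs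
    refine ⟨closure_flat' _ _, ?_⟩
    rw [rkS_closure (M := R) hGE, rkS_restrict (hsub _ hjs)]
    exact h2 _ hjs
  · intro y hy
    rw [Matroid.restrict_ground_eq] at hy
    obtain ⟨j, hjmem, hjy⟩ := by simpa using hcov hy
    refine mem_iUnion.2 ⟨e ⟨j, hjmem⟩, ?_⟩
    have : G j ⊆ R.closure (G j) := by
      refine R.subset_closure _ ?_
      rw [hR, Matroid.restrict_ground_eq]; exact hsub _ hjmem
    simpa using this hjy
  · have hterm : ∀ m : Fin t, rkS R (R.closure (G (e.symm m).1)) = rkS M (G (e.symm m).1) := by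
      intro m
      have hjs := (e.symm m).2
      have hGE : G (e.symm m).1 ⊆ R.E := by
        rw [hR, Matroid.restrict_ground_eq]; exact hsub _ hjs
      rw [rkS_closure (M := R) hGE, rkS_restrict (hsub _ hjs)]
    calc ∑ m : Fin t, (rkS R (R.closure (G (e.symm m).1)) - 1)
        = ∑ m : Fin t, (rkS M (G (e.symm m).1) - 1) := by
          exact Finset.sum_congr rfl fun m _ => by rw [hterm]
      _ = ∑ x : ↥s, (rkS M (G x.1) - 1) := Equiv.sum_comp e.symm (fun x : ↥s => rkS M (G x.1) - 1)
      _ = ∑ j ∈ s, (rkS M (G j) - 1) := Finset.sum_coe_sort s (fun j => rkS M (G j) - 1)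
      _ ≤ d - 1 := hsum

lemma degenSet_of_rkS_le [M.Finite] (hY : Y ⊆ M.E) {d : ℕ} (hrk : rkS M Y ≤ d) :
    DegenSet M Y d := by
  by_cases h1 : rkS M Y ≤ 1
  · exact Or.inl (by rw [rk_restrict]; exact h1)
  · refine degenSet_of_cover hY (ι := Unit) (s := {()}) (G := fun _ => Y)
      (fun _ _ => subset_refl _) (fun _ _ => by show 2 ≤ rkS M Y; omega) ?_ ?_
    · intro y hy
      exact Set.mem_biUnion (Finset.mem_singleton_self _) hy
    · rw [Finset.sum_singleton]
      show rkS M Y - 1 ≤ d - 1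
      omega

lemma degenSet_elim [M.Finite] (hY : Y ⊆ M.E) {d : ℕ} (h : DegenSet M Y d) :
    rkS M Y ≤ 1 ∨ ∃ (t : ℕ) (G : Fin t → Set α),
      (∀ j, G j ⊆ Y ∧ 2 ≤ rkS M (G j)) ∧ Y ⊆ ⋃ j, G j ∧
      ∑ j, (rkS M (G j) - 1) ≤ d - 1 := by
  obtain h | ⟨t, F, hF, hcov, hsum⟩ := h
  · rw [rk_restrict] at h; exact Or.inl h
  refine Or.inr ⟨t, F, fun j => ?_, ?_, ?_⟩
  · have hsub : F j ⊆ Y := by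
      have := (hF j).1.subset_ground
      rwa [Matroid.restrict_ground_eq] at this
    exact ⟨hsub, by rw [← rkS_restrict hsub]; exact (hF j).2⟩
  · rw [Matroid.restrict_ground_eq] at hcov; exact hcov
  · refine le_trans (le_of_eq (Finset.sum_congr rfl fun j _ => ?_)) hsum
    have hsub : F j ⊆ Y := by
      have := (hF j).1.subset_ground
      rwa [Matroid.restrict_ground_eq] at this
    rw [rkS_restrict hsub]

lemma rkS_union_eq_of_subset_closure [M.Finite] (hX : X ⊆ M.E) (hF : F ⊆ M.closure X) :
    rkS M (X ∪ F) = rkS M X := by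
  refine le_antisymm ?_ (rkS_mono subset_union_left
    (union_subset hX (hF.trans (M.closure_subset_ground X))))
  calc rkS M (X ∪ F) ≤ rkS M (M.closure X) :=
        rkS_mono (union_subset (M.subset_closure X hX) hF) (M.closure_subset_ground X)
    _ = rkS M X := rkS_closure hX

lemma rkS_merge [M.Finite] {ι : Type*} (hF : F ⊆ M.E) {G : ι → Set α} (S : Finset ι)
    (hsub : ∀ j ∈ S, G j ⊆ M.E) (hcl : ∀ j ∈ S, F ⊆ M.closure (G j)) :
    rkS M (⋃ j ∈ S, G j) + S.card * rkS M F ≤ ∑ j ∈ S, rkS M (G j) + rkS M F := by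
  classical
  induction S using Finset.induction_on with
  | empty => simp [rkS_empty]
  | @insert a s ha ih =>
    have hsub' : ∀ j ∈ s, G j ⊆ M.E := fun j hj => hsub j (Finset.mem_insert_of_mem hj)
    have hcl' : ∀ j ∈ s, F ⊆ M.closure (G j) := fun j hj => hcl j (Finset.mem_insert_of_mem hj)
    have hU : (⋃ j ∈ s, G j) ⊆ M.E := iUnion₂_subset hsub'
    have hA : G a ⊆ M.E := hsub a (Finset.mem_insert_self a s)
    have hIH := ih hsub' hcl'
    rcases s.eq_empty_or_nonempty with rfl | hs
    · simp [Finset.sum_insert ha]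
    · set U := ⋃ j ∈ s, G j with hUdef
      have hFU : F ⊆ M.closure U := by
        obtain ⟨j, hj⟩ := hs
        exact (hcl' j hj).trans (M.closure_subset_closure (subset_biUnion_of_mem hj))
      have hFA : F ⊆ M.closure (G a) := hcl a (Finset.mem_insert_self a s)
      have hrA : rkS M (G a ∪ F) = rkS M (G a) := rkS_union_eq_of_subset_closure hA hFA
      have hrU : rkS M (U ∪ F) = rkS M U := rkS_union_eq_of_subset_closure hU hFU
      have hFE : F ⊆ M.E := hF
      have hsm := rkS_submod (M := M) (X := G a ∪ F) (Y := U ∪ F)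
        (union_subset hA hFE) (union_subset hU hFE)
      have h1 : rkS M (G a ∪ U) ≤ rkS M ((G a ∪ F) ∪ (U ∪ F)) := by
        refine rkS_mono ?_ (union_subset (union_subset hA hFE) (union_subset hU hFE))
        exact union_subset_union subset_union_left subset_union_left
      have h2 : rkS M F ≤ rkS M ((G a ∪ F) ∩ (U ∪ F)) := by
        refine rkS_mono (subset_inter subset_union_right subset_union_right) ?_
        exact (inter_subset_left).trans (union_subset hA hFE)
      have hins : (⋃ j ∈ insert a s, G j) = G a ∪ U := by
        simp [hUdef, Finset.set_biUnion_insert]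
      rw [hins, Finset.sum_insert ha, Finset.card_insert_of_notMem ha]
      have hmul : (s.card + 1) * rkS M F = s.card * rkS M F + rkS M F := by ring
      omega

lemma ncard_biUnion_le' {ι : Type*} (s : Finset ι) (Z : ι → Set α)
    (hfin : ∀ j ∈ s, (Z j).Finite) :
    (⋃ j ∈ s, Z j).ncard ≤ ∑ j ∈ s, (Z j).ncard := by
  classical
  induction s using Finset.induction_on with
  | empty => simp
  | @insert a s ha ih =>
    rw [Finset.set_biUnion_insert, Finset.sum_insert ha]
    exact le_trans (Set.ncard_union_le _ _)
      (Nat.add_le_add_left (ih fun j hj => hfin j (Finset.mem_insert_of_mem hj)) _)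

end Aux

/-- Principal truncation of the rank-`i` flat `Xᵢ` preserves an optimal partial stratification. -/
theorem stmt18 (k : ℕ) (hk : 4 ≤ k) (M : Matroid α) [M.Finite] (hs : SimpleM M)
    (hr : rk M = k + 1) (X : ℕ → Set α)
    (hX1 : X 1 = ∅) (hXtop : X (k + 1) = M.E)
    (hchain : ∀ i, 2 ≤ i → i ≤ k → X i ⊆ X (i + 1))
    (hdeg : ∀ i, 2 ≤ i → i ≤ k → DegenSet M (X i) i)
    (hopt : ∀ i, 2 ≤ i → i ≤ k → ∀ Y ⊆ X (i + 1), DegenSet M Y i →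
      Y.ncard ≤ (X i).ncard)
    (i : ℕ) (hi3 : 3 ≤ i) (hik : i ≤ k - 1)
    (hflat : M.IsFlat (X i)) (hrk : rkS M (X i) = i)
    (hsmall : k * (X (i - 1)).ncard < (X i).ncard)
    (N : Matroid α) (hN : IsPT M (X i) N) :
    ∀ l, i ≤ l → l ≤ k →
      DegenSet N (X l) (l - 1) ∧
      ∀ Y ⊆ X (l + 1), DegenSet N Y (l - 1) → Y.ncard ≤ (X l).ncard := by
  intro l hil hlk
  obtain ⟨hNE, hNr⟩ := hN
  haveI hNfin : N.Finite := ⟨by rw [hNE]; exact M.ground_finite⟩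
  have hl3 : 3 ≤ l := le_trans hi3 hil
  -- chain monotonicity
  have hmono : ∀ a, 2 ≤ a → ∀ b, a ≤ b → b ≤ k + 1 → X a ⊆ X b := by
    intro a ha b hab hbk
    induction b, hab using Nat.le_induction with
    | base => exact subset_refl _
    | succ b hb ih =>
      exact (ih (by omega)).trans (hchain b (by omega) (by omega))
  have hXiE : X i ⊆ M.E := by
    rw [← hXtop]; exact hmono i (by omega) (k + 1) (by omega) le_rfl
  have hXlE : X l ⊆ M.E := by
    rw [← hXtop]; exact hmono l (by omega) (k + 1) (by omega) le_rfl
  have hXl1E : X (l + 1) ⊆ M.E := by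
    rw [← hXtop]; exact hmono (l + 1) (by omega) (k + 1) (by omega) le_rfl
  have hXil : X i ⊆ X l := hmono i (by omega) l hil (by omega)
  -- rank facts about N
  have hNrank : ∀ Z, Z ⊆ M.E → (X i ⊆ M.closure Z) → rkS N Z = rkS M Z - 1 := by
    intro Z hZ h; rw [hNr Z hZ, if_pos h]
  have hNrank' : ∀ Z, Z ⊆ M.E → ¬ (X i ⊆ M.closure Z) → rkS N Z = rkS M Z := by
    intro Z hZ h; rw [hNr Z hZ, if_neg h]
  have hclrank : ∀ Z, Z ⊆ M.E → (X i ⊆ M.closure Z) → i ≤ rkS M Z := by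
    intro Z hZ h
    calc i = rkS M (X i) := hrk.symm
      _ ≤ rkS M (M.closure Z) := rkS_mono h (M.closure_subset_ground Z)
      _ = rkS M Z := rkS_closure hZ
  constructor
  · -- CLAIM 1 : X l is (l-1)-degenerate in N
    have hrkXl : 3 ≤ rkS M (X l) := by
      have h := rkS_mono (M := M) hXil hXlE; omega
    obtain h1 | ⟨t, G, hG, hcov, hsum⟩ := degenSet_elim hXlE (hdeg l (by omega) hlk)
    · omega
    have hGXl : ∀ j, G j ⊆ X l := fun j => (hG j).1
    have hGE : ∀ j, G j ⊆ M.E := fun j => (hGXl j).trans hXlE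
    -- some covering flat spans X i, by the counting argument
    have hex : ∃ j0 : Fin t, X i ⊆ M.closure (G j0) := by
      by_contra hno
      push_neg at hno
      have hZcard : ∀ j : Fin t, (G j ∩ X i).ncard ≤ (X (i - 1)).ncard := by
        intro j
        have hZE : G j ∩ X i ⊆ M.E := inter_subset_right.trans hXiE
        have hlt : rkS M (G j ∩ X i) ≤ i - 1 := by
          by_contra hge
          push_neg at hge
          have h1 : rkS M (X i) ≤ rkS M (G j ∩ X i) := by omega
          have h2 : X i ⊆ M.closure (G j ∩ X i) :=
            subset_closure_of_rkS_le inter_subset_right hXiE h1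
          exact hno j (h2.trans (M.closure_subset_closure inter_subset_left))
        have hdz : DegenSet M (G j ∩ X i) (i - 1) := degenSet_of_rkS_le hZE hlt
        have hsub1 : G j ∩ X i ⊆ X (i - 1 + 1) := by
          have h : i - 1 + 1 = i := by omega
          rw [h]; exact inter_subset_right
        exact hopt (i - 1) (by omega) (by omega) _ hsub1 hdz
      have hcount : (X i).ncard ≤ ∑ j : Fin t, (G j ∩ X i).ncard := by
        have hsubU : X i ⊆ ⋃ j ∈ (Finset.univ : Finset (Fin t)), (G j ∩ X i) := by
          intro x hx
          obtain ⟨j, hj⟩ := mem_iUnion.1 (hcov (hXil hx))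
          simp only [Finset.mem_univ, Set.mem_iUnion, iUnion_true]
          exact ⟨j, hj, hx⟩
        calc (X i).ncard ≤ (⋃ j ∈ (Finset.univ : Finset (Fin t)), (G j ∩ X i)).ncard := by
              refine Set.ncard_le_ncard hsubU ?_
              exact Set.Finite.biUnion (Finset.finite_toSet _)
                fun j _ => (M.set_finite (X i) hXiE).subset inter_subset_right
          _ ≤ ∑ j : Fin t, (G j ∩ X i).ncard :=
              ncard_biUnion_le' _ _
                (fun j _ => (M.set_finite (X i) hXiE).subset inter_subset_right)
      have ht : t ≤ l - 1 := by
        have h1 : ∀ j : Fin t, 1 ≤ rkS M (G j) - 1 := fun j => by have := (hG j).2; omega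
        calc t = ∑ _j : Fin t, 1 := by simp
          _ ≤ ∑ j : Fin t, (rkS M (G j) - 1) := Finset.sum_le_sum fun j _ => h1 j
          _ ≤ l - 1 := hsum
      have hfinal : (X i).ncard ≤ t * (X (i - 1)).ncard := by
        calc (X i).ncard ≤ ∑ j : Fin t, (G j ∩ X i).ncard := hcount
          _ ≤ ∑ _j : Fin t, (X (i - 1)).ncard := Finset.sum_le_sum fun j _ => hZcard j
          _ = t * (X (i - 1)).ncard := by simp [Finset.sum_const, mul_comm]
      have hlek : t * (X (i - 1)).ncard ≤ k * (X (i - 1)).ncard :=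
        Nat.mul_le_mul_right _ (by omega)
      omega
    obtain ⟨j0, hj0⟩ := hex
    -- the same cover witnesses (l-1)-degeneracy in N
    refine degenSet_of_cover (M := N) (by rw [hNE]; exact hXlE)
      (s := (Finset.univ : Finset (Fin t))) (G := G)
      (fun j _ => hGXl j) (fun j _ => ?_) ?_ ?_
    · by_cases hc : X i ⊆ M.closure (G j)
      · have h := hclrank _ (hGE j) hc
        rw [hNrank _ (hGE j) hc]; omega
      · rw [hNrank' _ (hGE j) hc]; exact (hG j).2
    · intro y hy
      obtain ⟨j, hj⟩ := mem_iUnion.1 (hcov hy)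
      simp only [Finset.mem_univ, Set.mem_iUnion, iUnion_true]
      exact ⟨j, hj⟩
    · have hstrict : ∑ j : Fin t, (rkS N (G j) - 1) < ∑ j : Fin t, (rkS M (G j) - 1) := by
        refine Finset.sum_lt_sum (fun j _ => ?_) ⟨j0, Finset.mem_univ _, ?_⟩
        · by_cases hc : X i ⊆ M.closure (G j)
          · rw [hNrank _ (hGE j) hc]; omega
          · rw [hNrank' _ (hGE j) hc]
        · have h3 := hclrank _ (hGE j0) hj0
          rw [hNrank _ (hGE j0) hj0]; omega
      have h4 : ∑ j : Fin t, (rkS N (G j) - 1) ≤ l - 2 := by omega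
      exact le_trans h4 (le_of_eq (by omega))
  · -- CLAIM 2 : optimality in N
    intro Y hYX1 hYdeg
    have hYE : Y ⊆ M.E := hYX1.trans hXl1E
    suffices hYdegM : DegenSet M Y l from hopt l (by omega) hlk Y hYX1 hYdegM
    obtain h1 | ⟨t, G, hG, hcov, hsum⟩ :=
      degenSet_elim (M := N) (by rw [hNE]; exact hYE) hYdeg
    · refine degenSet_of_rkS_le hYE ?_
      have h2 := hNr Y hYE
      split_ifs at h2 <;> omega
    have hGY : ∀ j, G j ⊆ Y := fun j => (hG j).1
    have hGE : ∀ j, G j ⊆ M.E := fun j => (hGY j).trans hYE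
    set P : Fin t → Prop := fun j => X i ⊆ M.closure (G j) with hP
    set S : Finset (Fin t) := Finset.univ.filter P with hS
    set Sc : Finset (Fin t) := Finset.univ.filter (fun j => ¬ P j) with hSc
    have hmemS : ∀ j, j ∈ S ↔ P j := by
      intro j; rw [hS, Finset.mem_filter]; simp
    have hmemSc : ∀ j, j ∈ Sc ↔ ¬ P j := by
      intro j; rw [hSc, Finset.mem_filter]; simp
    have hrM : ∀ j ∈ S, rkS M (G j) = rkS N (G j) + 1 := by
      intro j hj
      have hc : P j := (hmemS j).1 hj
      have h3 : i ≤ rkS M (G j) := hclrank _ (hGE j) hc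
      rw [hNrank _ (hGE j) hc]; omega
    have hrM' : ∀ j ∈ Sc, rkS M (G j) = rkS N (G j) := by
      intro j hj
      exact (hNrank' _ (hGE j) ((hmemSc j).1 hj)).symm
    have hsplit : ∑ j ∈ S, (rkS N (G j) - 1) + ∑ j ∈ Sc, (rkS N (G j) - 1)
        = ∑ j : Fin t, (rkS N (G j) - 1) :=
      Finset.sum_filter_add_sum_filter_not _ _ _
    rcases S.eq_empty_or_nonempty with hSe | hSne
    · -- no covering flat spans X i : the same cover works in M
      have hallSc : ∀ j : Fin t, j ∈ Sc := by
        intro j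
        rw [hmemSc]
        intro hc
        have hjS : j ∈ S := (hmemS j).2 hc
        simp [hSe] at hjS
      refine degenSet_of_cover hYE (s := (Finset.univ : Finset (Fin t))) (G := G)
        (fun j _ => hGY j) (fun j _ => ?_) ?_ ?_
      · rw [hrM' j (hallSc j)]; exact (hG j).2
      · intro y hy
        obtain ⟨j, hj⟩ := mem_iUnion.1 (hcov hy)
        simp only [Finset.mem_univ, Set.mem_iUnion, iUnion_true]
        exact ⟨j, hj⟩
      · have heq : ∑ j : Fin t, (rkS M (G j) - 1) = ∑ j : Fin t, (rkS N (G j) - 1) :=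
          Finset.sum_congr rfl fun j _ => by rw [hrM' j (hallSc j)]
        rw [heq]
        exact le_trans hsum (by omega)
    · -- merge the spanning flats into a single flat H
      set U : Set α := ⋃ j ∈ S, G j with hU
      set H : Set α := M.closure U ∩ Y with hH
      have hUE : U ⊆ M.E := iUnion₂_subset fun j _ => hGE j
      have hHE : H ⊆ M.E := inter_subset_right.trans hYE
      have hmerge : rkS M U + S.card * rkS M (X i) ≤ ∑ j ∈ S, rkS M (G j) + rkS M (X i) :=
        rkS_merge (M := M) (F := X i) hXiE S (fun j _ => hGE j)
          (fun j hj => (hmemS j).1 hj)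
      rw [hrk] at hmerge
      have hHle : rkS M H ≤ rkS M U := by
        calc rkS M H ≤ rkS M (M.closure U) :=
              rkS_mono inter_subset_left (M.closure_subset_ground U)
          _ = rkS M U := rkS_closure hUE
      have hGH : ∀ j ∈ S, G j ⊆ H := fun j hj =>
        subset_inter ((subset_biUnion_of_mem hj).trans (M.subset_closure U hUE)) (hGY j)
      obtain ⟨j1, hj1⟩ := hSne
      have hH3 : 3 ≤ rkS M H := by
        have ha := rkS_mono (M := M) (hGH j1 hj1) hHE
        have hb := hrM j1 hj1
        have hc := (hG j1).2
        omega
      have hsumS : ∑ j ∈ S, rkS M (G j) = ∑ j ∈ S, ((rkS N (G j) - 1) + 2) :=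
        Finset.sum_congr rfl fun j hj => by
          have h2 := (hG j).2
          rw [hrM j hj]; omega
      have hsumS' : ∑ j ∈ S, rkS M (G j) = ∑ j ∈ S, (rkS N (G j) - 1) + 2 * S.card := by
        rw [hsumS, Finset.sum_add_distrib, Finset.sum_const, smul_eq_mul]; ring
      -- key bound : rkS M H ≤ ∑_{j ∈ S} (rkS N (G j) - 1) + 2
      have hc1 : 1 ≤ S.card := Finset.card_pos.2 ⟨j1, hj1⟩
      have hci : 2 * S.card + i ≤ S.card * i + 2 := by
        obtain ⟨c', hc'⟩ : ∃ c', S.card = c' + 1 := ⟨S.card - 1, by omega⟩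
        obtain ⟨i', hi'⟩ : ∃ i', i = i' + 3 := ⟨i - 3, by omega⟩
        rw [hc', hi']
        nlinarith
      have hHbound : rkS M H ≤ ∑ j ∈ S, (rkS N (G j) - 1) + 2 := by
        rw [hsumS'] at hmerge
        omega
      -- assemble the new cover of Y in M
      have hnone : (none : Option (Fin t)) ∉ Sc.map Function.Embedding.some := by simp
      refine degenSet_of_cover hYE (ι := Option (Fin t))
        (s := insert none (Sc.map Function.Embedding.some))
        (G := fun o => o.elim H G) (fun o _ => ?_) (fun o ho => ?_) ?_ ?_
      · cases o with
        | none => exact inter_subset_right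
        | some j => exact hGY j
      · cases o with
        | none => simpa using by omega
        | some j =>
          have hjSc : j ∈ Sc := by
            rcases Finset.mem_insert.1 ho with h | h
            · exact absurd h (by simp)
            · obtain ⟨j', hj', hjj'⟩ := Finset.mem_map.1 h
              have hj'j : j' = j := by simpa using hjj'
              exact hj'j ▸ hj'
          show 2 ≤ rkS M (G j)
          rw [hrM' j hjSc]; exact (hG j).2
      · intro y hy
        obtain ⟨j, hj⟩ := mem_iUnion.1 (hcov hy)
        by_cases hjS : j ∈ S
        · exact Set.mem_biUnion (Finset.mem_insert_self _ _) (hGH j hjS hj)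
        · have hjSc : j ∈ Sc := (hmemSc j).2 fun hc => hjS ((hmemS j).2 hc)
          exact Set.mem_biUnion
            (Finset.mem_insert_of_mem (Finset.mem_map_of_mem _ hjSc) :
              (some j : Option (Fin t)) ∈ insert none (Sc.map Function.Embedding.some)) hj
      · rw [Finset.sum_insert hnone, Finset.sum_map]
        have hscsum : ∑ j ∈ Sc, (rkS M ((Function.Embedding.some j).elim H G) - 1)
            = ∑ j ∈ Sc, (rkS N (G j) - 1) := by
          refine Finset.sum_congr rfl fun j hj => ?_
          have : (Function.Embedding.some j : Option (Fin t)) = some j := rfl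
          rw [this]
          show rkS M (G j) - 1 = rkS N (G j) - 1
          rw [hrM' j hj]
        rw [hscsum]
        show rkS M H - 1 + ∑ j ∈ Sc, (rkS N (G j) - 1) ≤ l - 1
        have hsum' : ∑ j : Fin t, (rkS N (G j) - 1) ≤ l - 1 - 1 := hsum
        omega

end MatroidPaper
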